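/- A numerical semigroup S (not symmetric) is nearly Gorenstein, i.e. M(S) ⊆ K(S) + (S - K(S)), if and only if for every minimal generator n_i of S there exists a pseudo-Frobenius number f_i such that n_i + f_i - f ∈ S for all pseudo-Frobenius numbers f of S. -/

import Mathlib

/-- A numerical semigroup: a subset of ℕ containing 0, closed under addition,
with finite complement. -/
def IsNumSgp (S : Set ℕ) : Prop :=
  0 ∈ S ∧ (∀ a ∈ S, ∀ b ∈ S, a + b ∈ S) ∧ (Sᶜ : Set ℕ).Finite

/-- An integer belongs to (the image in ℤ of) S. -/
def memZ (S : Set ℕ) (z : ℤ) : Prop := ∃ s ∈ S, (s : ℤ) = z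

/-- F is the Frobenius number of S: the largest natural number not in S. -/
def IsFrob (S : Set ℕ) (F : ℕ) : Prop := F ∉ S ∧ ∀ n, F < n → n ∈ S

/-- The set of pseudo-Frobenius numbers of S. -/
def PF (S : Set ℕ) : Set ℕ := {f | f ∉ S ∧ ∀ s ∈ S, s ≠ 0 → f + s ∈ S}

/-- n is a minimal generator of S. -/
def IsMinGen (S : Set ℕ) (n : ℕ) : Prop :=
  n ∈ S ∧ n ≠ 0 ∧ ¬∃ a ∈ S, ∃ b ∈ S, a ≠ 0 ∧ b ≠ 0 ∧ a + b = n

/-- S is almost symmetric (Nari): F - f ∈ PF(S) for every f ∈ PF(S). -/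
def AlmostSym (S : Set ℕ) (F : ℕ) : Prop :=
  ∀ f ∈ PF S, ∃ g ∈ PF S, (g : ℤ) = (F : ℤ) - (f : ℤ)

/-- S is symmetric: PF(S) = {F(S)} (vacuously true when S = ℕ). -/
def IsSym (S : Set ℕ) : Prop := ∀ F, IsFrob S F → PF S = {F}

/-- (f_1,...,f_ν) is an NG-vector for S with minimal generators n_1,...,n_ν. -/
def IsNGVector {ν : ℕ} (S : Set ℕ) (n f : Fin ν → ℕ) : Prop :=
  ∀ i, f i ∈ PF S ∧ ∀ g ∈ PF S, memZ S ((n i : ℤ) + (f i : ℤ) - (g : ℤ))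

/-- S is nearly Gorenstein (generator criterion): for each minimal generator m
there is f ∈ PF(S) with m + f - g ∈ S for all g ∈ PF(S). -/
def NearlyGGen (S : Set ℕ) : Prop :=
  ∀ m, IsMinGen S m → ∃ f ∈ PF S, ∀ g ∈ PF S, memZ S ((m : ℤ) + (f : ℤ) - (g : ℤ))

/-- The canonical ideal K(S) = {z ∈ ℤ : F - z ∉ S}. -/
def Kan (S : Set ℕ) (F : ℕ) : Set ℤ := {z | ¬ memZ S ((F : ℤ) - z)}

/-- The relative ideal (S - K(S)) = {z ∈ ℤ : z + K(S) ⊆ S}. -/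
def SmK (S : Set ℕ) (F : ℕ) : Set ℤ := {z | ∀ k ∈ Kan S F, memZ S (z + k)}

/-- S is nearly Gorenstein: M(S) ⊆ K(S) + (S - K(S)). -/
def NearlyG (S : Set ℕ) (F : ℕ) : Prop :=
  ∀ m ∈ S, m ≠ 0 → ∃ k ∈ Kan S F, ∃ x ∈ SmK S F, k + x = (m : ℤ)


lemma memZ_add_nat (S : Set ℕ) (hS : IsNumSgp S) {z : ℤ} {b : ℕ}
    (hz : memZ S z) (hb : b ∈ S) : memZ S (z + b) := by
  obtain ⟨s, hs, rfl⟩ := hz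
  exact ⟨s + b, hS.2.1 s hs b hb, by push_cast; ring⟩

lemma F_in_PF (S : Set ℕ) (F : ℕ) (hF : IsFrob S F) : F ∈ PF S :=
  ⟨hF.1, fun s _ hs0 => hF.2 _ (by omega)⟩

lemma gap_reaches_PF (S : Set ℕ) (hS : IsNumSgp S) {g : ℕ} (hg : g ∉ S) :
    ∃ f ∈ PF S, ∃ s ∈ S, f = g + s := by
  set T : Set ℕ := {f | f ∉ S ∧ ∃ s ∈ S, f = g + s} with hT
  have hfin : T.Finite := hS.2.2.subset (fun x hx => hx.1)
  have hne : g ∈ T := ⟨hg, 0, hS.1, by omega⟩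
  obtain ⟨f, hfT, hmax⟩ := Set.Finite.exists_maximalFor id T hfin ⟨g, hne⟩
  refine ⟨f, ⟨hfT.1, fun s hs hs0 => ?_⟩, hfT.2⟩
  by_contra hns
  obtain ⟨t, ht, hft⟩ := hfT.2
  have hmemT : f + s ∈ T := ⟨hns, t + s, hS.2.1 t ht s hs, by omega⟩
  have := hmax hmemT (Nat.le_add_right f s)
  simp only [id] at this
  omega

lemma mem_Kan_iff (S : Set ℕ) (F : ℕ) (hS : IsNumSgp S) (hF : IsFrob S F) (z : ℤ) :
    z ∈ Kan S F ↔ ∃ f ∈ PF S, ∃ s ∈ S, (F : ℤ) - f + s = z := by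
  constructor
  · intro hz
    by_cases hzF : (F : ℤ) - z < 0
    · exact ⟨F, F_in_PF S F hF, z.toNat, hF.2 _ (by omega), by omega⟩
    · have hg : ((F : ℤ) - z).toNat ∉ S := fun h => hz ⟨_, h, by omega⟩
      obtain ⟨f, hf, s, hs, hfs⟩ := gap_reaches_PF S hS hg
      exact ⟨f, hf, s, hs, by omega⟩
  · rintro ⟨f, hf, s, hs, rfl⟩
    rintro ⟨t, ht, het⟩
    have htf : t + s = f := by omega
    exact hf.1 (htf ▸ hS.2.1 t ht s hs)

lemma mem_SmK_iff (S : Set ℕ) (F : ℕ) (hS : IsNumSgp S) (hF : IsFrob S F) (x : ℤ) :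
    x ∈ SmK S F ↔ ∀ f ∈ PF S, memZ S (x + ((F : ℤ) - f)) := by
  constructor
  · intro hx f hf
    exact hx _ ((mem_Kan_iff S F hS hF _).2 ⟨f, hf, 0, hS.1, by push_cast; ring⟩)
  · intro hx k hk
    obtain ⟨f, hf, s, hs, rfl⟩ := (mem_Kan_iff S F hS hF k).1 hk
    have h1 := memZ_add_nat S hS (hx f hf) hs
    have he : (x + ((F : ℤ) - f)) + s = x + ((F : ℤ) - f + s) := by ring
    rwa [he] at h1

lemma NG_all (S : Set ℕ) (hS : IsNumSgp S)
    (h : ∀ m, IsMinGen S m → ∃ fi ∈ PF S, ∀ f ∈ PF S, memZ S ((m : ℤ) + fi - f)) :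
    ∀ m ∈ S, m ≠ 0 → ∃ fi ∈ PF S, ∀ f ∈ PF S, memZ S ((m : ℤ) + fi - f) := by
  intro m
  induction m using Nat.strong_induction_on with
  | _ m ih =>
    intro hm hm0
    by_cases hmin : IsMinGen S m
    · exact h m hmin
    · have hex : ∃ a ∈ S, ∃ b ∈ S, a ≠ 0 ∧ b ≠ 0 ∧ a + b = m := by
        by_contra hc
        exact hmin ⟨hm, hm0, hc⟩
      obtain ⟨a, ha, b, hb, ha0, hb0, hab⟩ := hex
      obtain ⟨fi, hfi, hall⟩ := ih a (by omega) ha ha0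
      refine ⟨fi, hfi, fun f hf => ?_⟩
      have h1 := memZ_add_nat S hS (hall f hf) hb
      have he : ((a : ℤ) + fi - f) + b = (m : ℤ) + fi - f := by
        have : (a : ℤ) + (b : ℤ) = (m : ℤ) := by exact_mod_cast congrArg (Nat.cast : ℕ → ℤ) hab
        omega
      rwa [he] at h1

theorem stmt1 (S : Set ℕ) (F : ℕ) (hS : IsNumSgp S) (hF : IsFrob S F)
    (hns : PF S ≠ {F}) :
    NearlyG S F ↔
      ∀ m, IsMinGen S m → ∃ fi ∈ PF S, ∀ f ∈ PF S,
        memZ S ((m : ℤ) + (fi : ℤ) - (f : ℤ)) := by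
  constructor
  · intro hNG m hm
    obtain ⟨k, hk, x, hx, hkx⟩ := hNG m hm.1 hm.2.1
    obtain ⟨f, hf, s, hs, rfl⟩ := (mem_Kan_iff S F hS hF k).1 hk
    refine ⟨f, hf, fun g hg => ?_⟩
    have h1 := memZ_add_nat S hS ((mem_SmK_iff S F hS hF x).1 hx g hg) hs
    have he : (x + ((F : ℤ) - g)) + s = (m : ℤ) + f - g := by omega
    rwa [he] at h1
  · intro h m hm hm0
    obtain ⟨fi, hfi, hall⟩ := NG_all S hS h m hm hm0
    refine ⟨(F : ℤ) - fi, (mem_Kan_iff S F hS hF _).2 ⟨fi, hfi, 0, hS.1, by push_cast; ring⟩,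
      (m : ℤ) - F + fi, (mem_SmK_iff S F hS hF _).2 fun g hg => ?_, by ring⟩
    have he : (m : ℤ) - F + fi + ((F : ℤ) - g) = (m : ℤ) + fi - g := by ring
    rw [he]; exact hall g hg
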